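/- Let u: ℝ² → ℝ be four times continuously differentiable and let (x,y) ∈ ℝ². Then the higher-order dangling-node approximation of u_xx is second-order accurate: the quantity [u(x−h, y+h/2) + u(x+h, y+h/2) + u(x+h, y−h/2) + u(x−h, y−h/2) − 2u(x, y+h/2) − 2u(x, y−h/2)]/(2h²) − u_xx(x,y) is O(h²) as h → 0⁺; that is, there exist constants C > 0 and h₀ > 0 such that its absolute value is at most C h² for all 0 < h < h₀. -/

import Mathlib

open Set

private lemma aux_idw (F : ℝ → ℝ) (hF : ContDiff ℝ 4 F) {n : ℕ} (hn : n ≤ 4)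
    {s : Set ℝ} (hs : UniqueDiffOn ℝ s) {t : ℝ} (ht : t ∈ s) :
    iteratedDerivWithin n F s t = iteratedDeriv n F t := by
  rw [iteratedDerivWithin_eq_iteratedFDerivWithin, iteratedDeriv_eq_iteratedFDeriv]
  congr 1
  exact (((contDiff_iff_ftaylorSeries.mp hF).hasFTaylorSeriesUpToOn s).eq_iteratedFDerivWithin_of_uniqueDiffOn
    (by exact_mod_cast hn) hs ht).symm

private lemma aux_even_deriv_zero (g : ℝ → ℝ) (hg : ∀ t, g (-t) = g t) : deriv g 0 = 0 := by
  have h1 : deriv (fun s : ℝ => g (-s)) 0 = -deriv g (-0) := deriv_comp_neg g 0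
  have h2 : (fun s : ℝ => g (-s)) = g := funext hg
  rw [h2, neg_zero] at h1
  linarith

/-- The dangling-node approximation of `u_xx` is second-order
accurate for `C⁴` functions. -/
theorem dangling_node_uxx_second_order
    (u : ℝ × ℝ → ℝ) (hu : ContDiff ℝ 4 u) (x y : ℝ) :
    ∃ C > (0:ℝ), ∃ h₀ > (0:ℝ), ∀ h : ℝ, 0 < h → h < h₀ →
      |(u (x - h, y + h/2) + u (x + h, y + h/2) + u (x + h, y - h/2)
          + u (x - h, y - h/2) - 2 * u (x, y + h/2) - 2 * u (x, y - h/2))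
            / (2 * h^2)
        - iteratedFDeriv ℝ 2 u (x, y) ![(1, 0), (1, 0)]| ≤ C * h^2 := by
  classical
  set U : ℝ := iteratedFDeriv ℝ 2 u (x, y) ![(1, 0), (1, 0)] with hU
  have hud : Differentiable ℝ u := hu.differentiable (by norm_num)
  have hu' : ContDiff ℝ 3 (fderiv ℝ u) := hu.fderiv_right (by norm_num)
  have hud' : Differentiable ℝ (fderiv ℝ u) := hu'.differentiable (by norm_num)
  have L1 : ∀ (γ : ℝ → ℝ × ℝ) (v : ℝ × ℝ), (∀ t, HasDerivAt γ v t) →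
      ∀ t, HasDerivAt (fun s => u (γ s)) (fderiv ℝ u (γ t) v) t := by
    intro γ v hγ t
    exact (hud (γ t)).hasFDerivAt.comp_hasDerivAt t (hγ t)
  have L2 : ∀ (γ : ℝ → ℝ × ℝ) (v : ℝ × ℝ), (∀ t, HasDerivAt γ v t) →
      ∀ t, HasDerivAt (fun s => fderiv ℝ u (γ s) v) (fderiv ℝ (fderiv ℝ u) (γ t) v v) t := by
    intro γ v hγ t
    have h := (hud' (γ t)).hasFDerivAt.comp_hasDerivAt t (hγ t)
    simpa using h.clm_apply (hasDerivAt_const t v)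
  -- the six curves
  have c1 : ∀ t : ℝ, HasDerivAt (fun s : ℝ => ((x - s, y + s/2) : ℝ × ℝ)) ((-1, 1/2) : ℝ × ℝ) t :=
    fun t => HasDerivAt.prodMk ((hasDerivAt_id t).const_sub x) (((hasDerivAt_id t).div_const 2).const_add y)
  have c2 : ∀ t : ℝ, HasDerivAt (fun s : ℝ => ((x + s, y + s/2) : ℝ × ℝ)) ((1, 1/2) : ℝ × ℝ) t :=
    fun t => HasDerivAt.prodMk ((hasDerivAt_id t).const_add x) (((hasDerivAt_id t).div_const 2).const_add y)
  have c3 : ∀ t : ℝ, HasDerivAt (fun s : ℝ => ((x + s, y - s/2) : ℝ × ℝ)) ((1, -(1/2)) : ℝ × ℝ) t :=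
    fun t => HasDerivAt.prodMk ((hasDerivAt_id t).const_add x) (((hasDerivAt_id t).div_const 2).const_sub y)
  have c4 : ∀ t : ℝ, HasDerivAt (fun s : ℝ => ((x - s, y - s/2) : ℝ × ℝ)) ((-1, -(1/2)) : ℝ × ℝ) t :=
    fun t => HasDerivAt.prodMk ((hasDerivAt_id t).const_sub x) (((hasDerivAt_id t).div_const 2).const_sub y)
  have c5 : ∀ t : ℝ, HasDerivAt (fun s : ℝ => ((x, y + s/2) : ℝ × ℝ)) ((0, 1/2) : ℝ × ℝ) t :=
    fun t => HasDerivAt.prodMk (hasDerivAt_const t x) (((hasDerivAt_id t).div_const 2).const_add y)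
  have c6 : ∀ t : ℝ, HasDerivAt (fun s : ℝ => ((x, y - s/2) : ℝ × ℝ)) ((0, -(1/2)) : ℝ × ℝ) t :=
    fun t => HasDerivAt.prodMk (hasDerivAt_const t x) (((hasDerivAt_id t).div_const 2).const_sub y)
  -- the 1D function F
  set F : ℝ → ℝ := fun t => u (x - t, y + t/2) + u (x + t, y + t/2) + u (x + t, y - t/2)
      + u (x - t, y - t/2) - 2 * u (x, y + t/2) - 2 * u (x, y - t/2) with hFdef
  have FC : ContDiff ℝ 4 F := by
    have hc : ∀ (γ : ℝ → ℝ × ℝ) (v : ℝ × ℝ), (∀ t, HasDerivAt γ v t) → ContDiff ℝ 4 (fun s => u (γ s)) := by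
      intro γ v hγ
      apply hu.comp
      have : Differentiable ℝ γ := fun t => (hγ t).differentiableAt
      -- γ is affine: γ s = γ 0 + s • v
      have hγeq : γ = fun s => γ 0 + s • v := by
        funext s
        have : ∀ t, HasDerivAt (fun s => γ s - s • v) 0 t := by
          intro t
          have h := (hγ t).sub ((hasDerivAt_id t).smul_const v)
          simp only [one_smul, sub_self] at h
          exact h
        have hconst := is_const_of_deriv_eq_zero (𝕜 := ℝ) (f := fun s => γ s - s • v)
          (fun t => (this t).differentiableAt) (fun t => (this t).deriv) s 0
        have : γ s - s • v = γ 0 - (0:ℝ) • v := hconst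
        simp only [zero_smul, sub_zero] at this
        rw [← this]; abel
      rw [hγeq]
      exact contDiff_const.add (contDiff_id.smul contDiff_const)
    exact ((((hc _ _ c1).add (hc _ _ c2)).add (hc _ _ c3)).add (hc _ _ c4)).sub
        ((contDiff_const.mul (hc _ _ c5))) |>.sub (contDiff_const.mul (hc _ _ c6))
  -- first derivative of F
  set G : ℝ → ℝ := fun t => fderiv ℝ u (x - t, y + t/2) (-1, 1/2) + fderiv ℝ u (x + t, y + t/2) (1, 1/2)
      + fderiv ℝ u (x + t, y - t/2) (1, -(1/2)) + fderiv ℝ u (x - t, y - t/2) (-1, -(1/2))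
      - 2 * fderiv ℝ u (x, y + t/2) (0, 1/2) - 2 * fderiv ℝ u (x, y - t/2) (0, -(1/2)) with hGdef
  have dF : ∀ t, HasDerivAt F (G t) t := by
    intro t
    exact ((((L1 _ _ c1 t).add (L1 _ _ c2 t)).add (L1 _ _ c3 t)).add (L1 _ _ c4 t)).sub
        ((L1 _ _ c5 t).const_mul 2) |>.sub ((L1 _ _ c6 t).const_mul 2)
  have derivF : deriv F = G := funext fun t => (dF t).deriv
  -- second derivative of F at 0
  set A := fderiv ℝ (fderiv ℝ u) (x, y) with hA
  have dG0 : HasDerivAt G (A (-1, 1/2) (-1, 1/2) + A (1, 1/2) (1, 1/2) + A (1, -(1/2)) (1, -(1/2))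
      + A (-1, -(1/2)) (-1, -(1/2)) - 2 * A (0, 1/2) (0, 1/2) - 2 * A (0, -(1/2)) (0, -(1/2))) 0 := by
    have h := ((((L2 _ _ c1 0).add (L2 _ _ c2 0)).add (L2 _ _ c3 0)).add (L2 _ _ c4 0)).sub
        ((L2 _ _ c5 0).const_mul 2) |>.sub ((L2 _ _ c6 0).const_mul 2)
    norm_num at h
    convert h using 2
    all_goals rfl
  -- bilinear expansion
  have hsym : A (1, 0) (0, 1) = A (0, 1) (1, 0) :=
    (hu.contDiffAt.isSymmSndFDerivAt (by norm_num)) (1, 0) (0, 1)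
  have bil : ∀ a b : ℝ, A (a, b) (a, b) = a * a * A (1, 0) (1, 0)
      + a * b * (A (1, 0) (0, 1) + A (0, 1) (1, 0)) + b * b * A (0, 1) (0, 1) := by
    intro a b
    have hv : ((a, b) : ℝ × ℝ) = a • ((1, 0) : ℝ × ℝ) + b • ((0, 1) : ℝ × ℝ) := by
      simp [Prod.ext_iff]
    rw [hv]
    simp only [map_add, map_smul, ContinuousLinearMap.add_apply, ContinuousLinearMap.coe_smul',
      Pi.smul_apply, smul_eq_mul]
    ring
  have hU2 : U = A (1, 0) (1, 0) := by
    rw [hU, iteratedFDeriv_two_apply]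
    simp only [Matrix.cons_val_zero, Matrix.cons_val_one, Matrix.head_cons]
    rfl
  have derivG0 : deriv G 0 = 4 * U := by
    have b1 := bil (-1) (1/2)
    have b2 := bil 1 (1/2)
    have b3 := bil 1 (-(1/2))
    have b4 := bil (-1) (-(1/2))
    have b5 := bil 0 (1/2)
    have b6 := bil 0 (-(1/2))
    rw [dG0.deriv, b1, b2, b3, b4, b5, b6, hsym, hU2]
    ring
  -- evenness of F
  have Feven : ∀ t, F (-t) = F t := by
    intro t
    simp only [hFdef]
    have e1 : x - -t = x + t := by ring
    have e2 : x + -t = x - t := by ring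
    have e3 : y + -t/2 = y - t/2 := by ring
    have e4 : y - -t/2 = y + t/2 := by ring
    rw [e1, e2, e3, e4]
    ring
  have derivF0 : deriv F 0 = 0 := aux_even_deriv_zero F Feven
  -- deriv F is odd, so deriv (deriv F) is even, so the third derivative vanishes at 0
  have Godd : ∀ t, G (-t) = -G t := by
    intro t
    have hFc : F = fun s => F (-s) := funext fun s => (Feven s).symm
    have h1 : deriv F t = -deriv F (-t) := by
      conv_lhs => rw [hFc]
      exact deriv_comp_neg F t
    rw [derivF] at h1
    linarith
  have Geven' : ∀ t, deriv G (-t) = deriv G t := by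
    intro t
    have hGc : G = fun s => -G (-s) := funext fun s => by rw [Godd]; ring
    have h1 : deriv G t = deriv (fun s => -G (-s)) t := by conv_lhs => rw [hGc]
    have h2 : deriv (fun s : ℝ => -G (-s)) t = -deriv (fun s : ℝ => G (-s)) t := deriv.neg
    have h3 : deriv (fun s : ℝ => G (-s)) t = -deriv G (-t) := deriv_comp_neg G t
    rw [h2, h3] at h1
    linarith
  have deriv3F0 : deriv (deriv G) 0 = 0 := aux_even_deriv_zero (deriv G) Geven'
  -- iterated derivatives at 0
  have iD0 : iteratedDeriv 0 F 0 = 0 := by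
    simp only [iteratedDeriv_zero, hFdef]
    norm_num
    ring
  have iD1 : iteratedDeriv 1 F 0 = 0 := by
    rw [iteratedDeriv_one]; exact derivF0
  have it2 : iteratedDeriv 2 F = deriv (deriv F) := by
    rw [iteratedDeriv_eq_iterate]; rfl
  have it3 : iteratedDeriv 3 F = deriv (deriv (deriv F)) := by
    rw [iteratedDeriv_eq_iterate]; rfl
  have iD2 : iteratedDeriv 2 F 0 = 4 * U := by
    rw [it2, derivF]; exact derivG0
  have iD3 : iteratedDeriv 3 F 0 = 0 := by
    rw [it3, derivF]; exact deriv3F0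
  -- bound on the 4th derivative on [0,1]
  have cont4 : Continuous (iteratedDeriv 4 F) := FC.continuous_iteratedDeriv 4 (by norm_num)
  obtain ⟨M, hM⟩ := (isCompact_Icc (a := (0:ℝ)) (b := 1)).exists_bound_of_continuousOn
    cont4.continuousOn
  have hM0 : 0 ≤ M := le_trans (norm_nonneg _) (hM 0 ⟨le_rfl, by norm_num⟩)
  refine ⟨M / 48 + 1, by positivity, 1, by norm_num, ?_⟩
  intro h hpos hlt
  have hne : (2 : ℝ) * h ^ 2 ≠ 0 := by positivity
  -- Taylor's theorem
  have FC' : ContDiffOn ℝ 3 F (Icc 0 h) := (FC.of_le (by norm_num)).contDiffOn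
  have hUD : UniqueDiffOn ℝ (Icc (0:ℝ) h) := uniqueDiffOn_Icc hpos
  have hdiff : DifferentiableOn ℝ (iteratedDerivWithin 3 F (Icc 0 h)) (Ioo 0 h) := by
    apply DifferentiableOn.congr
      ((FC.differentiable_iteratedDeriv 3 (by norm_num)).differentiableOn (s := Ioo 0 h))
    intro z hz
    exact aux_idw F FC (by norm_num) hUD (Ioo_subset_Icc_self hz)
  have hI : uIcc (0:ℝ) h = Icc 0 h := Set.uIcc_of_le hpos.le
  have hIoo : uIoo (0:ℝ) h = Ioo 0 h := Set.uIoo_of_le hpos.le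
  obtain ⟨ξ, hξ, hTay⟩ := taylor_mean_remainder_lagrange (n := 3) (x₀ := 0) (x := h) hpos.ne
    (by rw [hI]; exact FC') (by rw [hI, hIoo]; exact hdiff)
  rw [hIoo] at hξ
  rw [hI] at hTay
  have hξ1 : ξ ∈ Icc (0:ℝ) 1 := ⟨le_of_lt hξ.1, le_trans (le_of_lt hξ.2) (le_of_lt hlt)⟩
  have key4 : iteratedDerivWithin 4 F (Icc 0 h) ξ = iteratedDeriv 4 F ξ :=
    aux_idw F FC (by norm_num) hUD (Ioo_subset_Icc_self hξ)
  have hTaylorVal : taylorWithinEval F 3 (Icc 0 h) 0 h = 2 * U * h ^ 2 := by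
    rw [taylor_within_apply]
    have e0 := aux_idw F FC (n := 0) (by norm_num) hUD (left_mem_Icc.mpr (le_of_lt hpos))
    have e1 := aux_idw F FC (n := 1) (by norm_num) hUD (left_mem_Icc.mpr (le_of_lt hpos))
    have e2 := aux_idw F FC (n := 2) (by norm_num) hUD (left_mem_Icc.mpr (le_of_lt hpos))
    have e3 := aux_idw F FC (n := 3) (by norm_num) hUD (left_mem_Icc.mpr (le_of_lt hpos))
    rw [Finset.sum_range_succ, Finset.sum_range_succ, Finset.sum_range_succ,
      Finset.sum_range_succ, Finset.sum_range_zero, e0, e1, e2, e3, iD0, iD1, iD2, iD3]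
    norm_num [Nat.factorial]
    ring
  rw [hTaylorVal, key4] at hTay
  -- final computation
  have hFh : F h - 2 * U * h ^ 2 = iteratedDeriv 4 F ξ * h ^ 4 / 24 := by
    rw [hTay]; norm_num [Nat.factorial]
  have goal_eq : (u (x - h, y + h/2) + u (x + h, y + h/2) + u (x + h, y - h/2)
      + u (x - h, y - h/2) - 2 * u (x, y + h/2) - 2 * u (x, y - h/2)) / (2 * h^2) - U
      = iteratedDeriv 4 F ξ / 48 * h ^ 2 := by
    have hnum : u (x - h, y + h/2) + u (x + h, y + h/2) + u (x + h, y - h/2)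
        + u (x - h, y - h/2) - 2 * u (x, y + h/2) - 2 * u (x, y - h/2) = F h := rfl
    rw [hnum]
    have hFh' : F h = 2 * U * h ^ 2 + iteratedDeriv 4 F ξ * h ^ 4 / 24 := by linarith
    rw [hFh']
    field_simp
    ring
  rw [goal_eq]
  have hb : |iteratedDeriv 4 F ξ / 48 * h ^ 2| = |iteratedDeriv 4 F ξ| / 48 * h ^ 2 := by
    rw [abs_mul, abs_div]
    norm_num [abs_of_nonneg (sq_nonneg h)]
  rw [hb]
  have hMb : |iteratedDeriv 4 F ξ| ≤ M := hM ξ hξ1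
  have h2 : |iteratedDeriv 4 F ξ| / 48 ≤ M / 48 + 1 := by linarith
  exact mul_le_mul_of_nonneg_right h2 (sq_nonneg h)
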